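/- Structure and validity of the scaled inverse measurement: With the SIM operators as defined, Σ_{i=1}^m μ_i μ_i^* = γ² Δ^{-1}, so Σ_0 = I − γ² Δ^{-1}; moreover the family {Σ_i}_{i=0}^m is a measurement (i.e., Σ_0 is positive semidefinite) if and only if γ² ≤ λ_min, where λ_min is the smallest eigenvalue of Δ. -/

import Mathlib

open Matrix BigOperators ComplexOrder

private lemma psd_add {n : ℕ} {A B : Matrix (Fin n) (Fin n) ℂ}
    (hA : A.PosSemidef) (hB : B.PosSemidef) : (A + B).PosSemidef := by
  refine PosSemidef.of_dotProduct_mulVec_nonneg (hA.1.add hB.1) fun x => ?_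
  rw [add_mulVec, dotProduct_add]
  exact add_nonneg (hA.dotProduct_mulVec_nonneg x) (hB.dotProduct_mulVec_nonneg x)

private lemma psd_sum {n : ℕ} {ι : Type*} (s : Finset ι)
    (f : ι → Matrix (Fin n) (Fin n) ℂ) (h : ∀ i ∈ s, (f i).PosSemidef) :
    (∑ i ∈ s, f i).PosSemidef := by
  classical
  induction s using Finset.induction_on with
  | empty => simpa using (Matrix.PosSemidef.zero : (0 : Matrix (Fin n) (Fin n) ℂ).PosSemidef)
  | insert _ _ hnotmem ih =>
    rw [Finset.sum_insert hnotmem]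
    exact psd_add (h _ (Finset.mem_insert_self _ _))
      (ih fun i hi => h i (Finset.mem_insert_of_mem hi))

theorem stmt_5 {n m : ℕ} {r : Fin m → ℕ}
    (φ : (i : Fin m) → Matrix (Fin n) (Fin (r i)) ℂ)
    (p : Fin m → ℝ) (hp : ∀ i, 0 < p i) (hpsum : ∑ i, p i = 1)
    (ρ : Fin m → Matrix (Fin n) (Fin n) ℂ) (hρ : ∀ i, ρ i = φ i * (φ i)ᴴ)
    (hρtr : ∀ i, (ρ i).trace = 1)
    (Δ : Matrix (Fin n) (Fin n) ℂ) (hΔ : Δ = ∑ i, (p i : ℂ) • ρ i)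
    (hΔinv : IsUnit Δ.det) (hΔH : Δ.IsHermitian)
    (lam : ℝ) (hlam : IsLeast (Set.range hΔH.eigenvalues) lam)
    (γ : ℝ) (hγ : 0 < γ)
    (ψ : (i : Fin m) → Matrix (Fin n) (Fin (r i)) ℂ)
    (hψ : ∀ i, ψ i = (Real.sqrt (p i) : ℂ) • φ i)
    (μ : (i : Fin m) → Matrix (Fin n) (Fin (r i)) ℂ)
    (hμ : ∀ i, μ i = (γ : ℂ) • (Δ⁻¹ * ψ i)) :
    (∑ i, μ i * (μ i)ᴴ = ((γ : ℂ)^2) • Δ⁻¹) ∧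
    ((1 - ∑ i, μ i * (μ i)ᴴ).PosSemidef ↔ γ^2 ≤ lam) := by
  have hΔiH : (Δ⁻¹).IsHermitian := hΔH.inv
  -- ψ i * (ψ i)ᴴ = p i • ρ i
  have hψψ : ∀ i, ψ i * (ψ i)ᴴ = (p i : ℂ) • ρ i := by
    intro i
    rw [hψ, hρ, conjTranspose_smul, Matrix.smul_mul, Matrix.mul_smul, smul_smul]
    rw [Complex.star_def, Complex.conj_ofReal, ← Complex.ofReal_mul,
      Real.mul_self_sqrt (hp i).le]
  -- key identity
  have key : ∑ i, μ i * (μ i)ᴴ = ((γ : ℂ)^2) • Δ⁻¹ := by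
    have hterm : ∀ i, μ i * (μ i)ᴴ
        = ((γ : ℂ)^2) • (Δ⁻¹ * ((p i : ℂ) • ρ i) * Δ⁻¹) := by
      intro i
      rw [hμ, conjTranspose_smul, Matrix.smul_mul, Matrix.mul_smul, smul_smul,
        conjTranspose_mul, hΔiH.eq, Complex.star_def, Complex.conj_ofReal, ← sq,
        Matrix.mul_assoc Δ⁻¹, ← Matrix.mul_assoc (ψ i), hψψ, ← Matrix.mul_assoc]
    rw [Finset.sum_congr rfl fun i _ => hterm i, ← Finset.smul_sum]
    congr 1
    calc ∑ i, Δ⁻¹ * ((p i : ℂ) • ρ i) * Δ⁻¹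
        = Δ⁻¹ * (∑ i, (p i : ℂ) • ρ i) * Δ⁻¹ := by
          rw [Finset.mul_sum, Finset.sum_mul]
      _ = Δ⁻¹ := by rw [← hΔ, Matrix.nonsing_inv_mul Δ hΔinv, one_mul]
  refine ⟨key, ?_⟩
  rw [key]
  -- positivity of eigenvalues
  have hΔPSD : Δ.PosSemidef := by
    rw [hΔ]
    refine psd_sum _ _ fun i _ => ?_
    have h1 : (φ i * (φ i)ᴴ).PosSemidef := Matrix.posSemidef_self_mul_conjTranspose _
    refine PosSemidef.of_dotProduct_mulVec_nonneg ?_ fun x => ?_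
    · rw [hρ]
      show (((p i : ℂ)) • (φ i * (φ i)ᴴ))ᴴ = _
      rw [Matrix.conjTranspose_smul, Complex.star_def, Complex.conj_ofReal, h1.1.eq]
    · rw [hρ, Matrix.smul_mulVec, dotProduct_smul]
      exact mul_nonneg (by exact_mod_cast (hp i).le) (h1.dotProduct_mulVec_nonneg x)
  set ev := hΔH.eigenvalues with hev
  have hev_nonneg : ∀ i, 0 ≤ ev i := fun i => hΔPSD.eigenvalues_nonneg i
  have hdet : Δ.det = ∏ i, (ev i : ℂ) := hΔH.det_eq_prod_eigenvalues
  have hev_ne : ∀ i, ev i ≠ 0 := by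
    intro i hi
    apply hΔinv.ne_zero
    rw [hdet]
    exact Finset.prod_eq_zero (Finset.mem_univ i) (by rw [hi, Complex.ofReal_zero])
  have hev_pos : ∀ i, 0 < ev i := fun i => (hev_nonneg i).lt_of_ne (Ne.symm (hev_ne i))
  set U : Matrix (Fin n) (Fin n) ℂ := (hΔH.eigenvectorUnitary : Matrix (Fin n) (Fin n) ℂ)
    with hU
  have hUU : Uᴴ * U = 1 := by
    rw [← Matrix.star_eq_conjTranspose]
    exact Matrix.mem_unitaryGroup_iff'.mp hΔH.eigenvectorUnitary.2
  have hUU' : U * Uᴴ = 1 := by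
    rw [← Matrix.star_eq_conjTranspose]
    exact Matrix.mem_unitaryGroup_iff.mp hΔH.eigenvectorUnitary.2
  have hspec : Δ = U * Matrix.diagonal (fun i => (ev i : ℂ)) * Uᴴ := by
    have := hΔH.spectral_theorem
    rw [Unitary.conjStarAlgAut_apply, Matrix.star_eq_conjTranspose] at this
    exact this
  have hinv : Δ⁻¹ = U * Matrix.diagonal (fun i => ((ev i)⁻¹ : ℂ)) * Uᴴ := by
    apply Matrix.inv_eq_right_inv
    rw [hspec]
    simp only [Matrix.mul_assoc]
    rw [← Matrix.mul_assoc Uᴴ U, hUU, one_mul,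
      ← Matrix.mul_assoc (Matrix.diagonal fun i => ((ev i : ℂ))),
      Matrix.diagonal_mul_diagonal]
    have h1 : (fun i => (ev i : ℂ) * ((ev i)⁻¹ : ℂ)) = fun _ => (1 : ℂ) := by
      funext i
      rw [← Complex.ofReal_inv, ← Complex.ofReal_mul, mul_inv_cancel₀ (hev_ne i),
        Complex.ofReal_one]
    rw [h1, Matrix.diagonal_one, one_mul, hUU']
  have hdecomp : (1 : Matrix (Fin n) (Fin n) ℂ) - ((γ : ℂ)^2) • Δ⁻¹
      = U * Matrix.diagonal (fun i => ((1 - γ^2 / ev i : ℝ) : ℂ)) * Uᴴ := by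
    have : Matrix.diagonal (fun i => ((1 - γ^2 / ev i : ℝ) : ℂ))
        = (1 : Matrix (Fin n) (Fin n) ℂ)
          - ((γ : ℂ)^2) • Matrix.diagonal (fun i => ((ev i)⁻¹ : ℂ)) := by
      ext i j
      rcases eq_or_ne i j with rfl | hij
      · simp only [Matrix.diagonal_apply_eq, Matrix.sub_apply, Matrix.smul_apply,
          Matrix.one_apply_eq, smul_eq_mul]
        push_cast
        ring
      · simp [Matrix.diagonal_apply_ne _ hij, Matrix.one_apply_ne hij]
    rw [this, Matrix.mul_sub, Matrix.sub_mul, hinv]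
    congr 1
    · rw [mul_one, hUU']
    · rw [Matrix.mul_smul, Matrix.smul_mul]
  rw [hdecomp]
  have hdiag : (U * Matrix.diagonal (fun i => ((1 - γ^2 / ev i : ℝ) : ℂ)) * Uᴴ).PosSemidef
      ↔ ∀ i, (0 : ℂ) ≤ ((1 - γ^2 / ev i : ℝ) : ℂ) := by
    constructor
    · intro h
      have h2 := h.conjTranspose_mul_mul_same U
      rw [show Uᴴ * (U * Matrix.diagonal (fun i => ((1 - γ^2 / ev i : ℝ) : ℂ)) * Uᴴ) * U
          = Matrix.diagonal (fun i => ((1 - γ^2 / ev i : ℝ) : ℂ)) by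
        simp only [Matrix.mul_assoc]
        rw [hUU, Matrix.mul_one, ← Matrix.mul_assoc, hUU, one_mul]]
          at h2
      exact Matrix.posSemidef_diagonal_iff.mp h2
    · intro h
      exact (Matrix.posSemidef_diagonal_iff.mpr h).mul_mul_conjTranspose_same U
  rw [hdiag]
  constructor
  · intro h
    obtain ⟨i₀, hi₀⟩ := hlam.1
    have := h i₀
    rw [Complex.zero_le_real, sub_nonneg, div_le_one (hev_pos i₀)] at this
    rw [← hi₀]
    exact this
  · intro h i
    rw [Complex.zero_le_real, sub_nonneg, div_le_one (hev_pos i)]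
    exact h.trans (hlam.2 ⟨i, rfl⟩)
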